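/- For n ≥ 2, there is a bijection between the set H(n) of zero-free degree sequences of length n whose largest part equals n-1 and the set D_0(n-1) of degree sequences of length n-1 allowing zero terms; hence |H(n)| = |D_0(n-1)|. -/

import Mathlib

/-- A function `d : Fin n → ℕ` is graphic if it is the degree sequence of a
simple undirected graph on `n` vertices. -/
def Graphic (n : ℕ) (d : Fin n → ℕ) : Prop :=
  ∃ G : SimpleGraph (Fin n), ∀ v, (G.neighborSet v).ncard = d v

/-- Zero-free degree sequences of length `n` (non-increasing, positive, graphic). -/
def D (n : ℕ) : Set (Fin n → ℕ) :=
  {d | Antitone d ∧ (∀ i, 0 < d i) ∧ Graphic n d}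

/-- Degree sequences of length `n` allowing zero terms. -/
def D0 (n : ℕ) : Set (Fin n → ℕ) :=
  {d | Antitone d ∧ Graphic n d}

/-- Zero-free degree sequences of length n with largest part exactly n-1. -/
def H (n : ℕ) : Set (Fin n → ℕ) := {d | d ∈ D n ∧ ∃ i, d i = n - 1}

namespace HD0Aux

lemma deg_lt {n : ℕ} (G : SimpleGraph (Fin n)) (v : Fin n) :
    (G.neighborSet v).ncard < n := by
  have hss : G.neighborSet v ⊂ Set.univ := by
    refine Set.ssubset_univ_iff.mpr ?_
    intro h
    have : v ∈ G.neighborSet v := h ▸ Set.mem_univ v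
    exact G.irrefl this
  have := Set.ncard_lt_ncard hss (Set.finite_univ)
  simpa [Set.ncard_univ] using this

lemma ncard_compl_singleton {m : ℕ} (v : Fin (m + 1)) :
    ({v}ᶜ : Set (Fin (m + 1))).ncard = m := by
  have h : insert v ({v}ᶜ : Set (Fin (m + 1))) = Set.univ := by
    ext w; by_cases hw : w = v <;> simp [hw]
  have h2 : (insert v ({v}ᶜ : Set (Fin (m + 1)))).ncard = ({v}ᶜ : Set (Fin (m + 1))).ncard + 1 :=
    Set.ncard_insert_of_notMem (by simp) (Set.toFinite _)
  rw [h, Set.ncard_univ] at h2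
  simp only [Nat.card_eq_fintype_card, Fintype.card_fin] at h2
  omega

lemma dominating {m : ℕ} (G : SimpleGraph (Fin (m + 1)))
    (h : (G.neighborSet 0).ncard = m) : ∀ w, w ≠ 0 → G.Adj 0 w := by
  have hsub : G.neighborSet 0 ⊆ ({(0 : Fin (m+1))}ᶜ : Set (Fin (m+1))) := by
    intro w hw
    simp only [Set.mem_compl_iff, Set.mem_singleton_iff]
    exact fun h0 => G.irrefl (h0 ▸ hw)
  have heq : G.neighborSet 0 = ({(0 : Fin (m+1))}ᶜ : Set (Fin (m+1))) := by
    apply Set.eq_of_subset_of_ncard_le hsub _ (Set.toFinite _)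
    rw [h, ncard_compl_singleton]
  intro w hw
  have : w ∈ G.neighborSet 0 := by rw [heq]; simpa using hw
  exact this

/-- delete the dominating vertex 0 -/
lemma graphic_del {m : ℕ} (G : SimpleGraph (Fin (m + 1)))
    (h0 : ∀ w, w ≠ 0 → G.Adj 0 w) (j : Fin m) :
    ((G.comap Fin.succ).neighborSet j).ncard + 1 = (G.neighborSet j.succ).ncard := by
  have key : G.neighborSet j.succ =
      insert 0 (Fin.succ '' ((G.comap Fin.succ).neighborSet j)) := by
    ext w
    refine Fin.cases ?_ (fun k => ?_) w
    · simp only [SimpleGraph.mem_neighborSet, Set.mem_insert_iff, true_or, iff_true]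
      exact (h0 j.succ (Fin.succ_ne_zero j)).symm
    · simp only [SimpleGraph.mem_neighborSet, Set.mem_insert_iff, Set.mem_image,
        SimpleGraph.comap_adj]
      constructor
      · intro hadj
        right
        exact ⟨k, hadj, rfl⟩
      · rintro ((h | ⟨k', hk', hk'eq⟩))
        · exact absurd h (Fin.succ_ne_zero k)
        · rwa [← Fin.succ_injective m hk'eq]
  rw [key, Set.ncard_insert_of_notMem, Set.ncard_image_of_injective _ (Fin.succ_injective m)]
  rintro ⟨k, -, hk⟩
  exact Fin.succ_ne_zero k hk

/-- add a dominating vertex -/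
def addDom {m : ℕ} (G' : SimpleGraph (Fin m)) : SimpleGraph (Fin (m + 1)) where
  Adj a b := (a = 0 ∧ b ≠ 0) ∨ (a ≠ 0 ∧ b = 0) ∨
    ∃ j k : Fin m, a = j.succ ∧ b = k.succ ∧ G'.Adj j k
  symm := by
    constructor
    rintro a b (⟨h1, h2⟩ | ⟨h1, h2⟩ | ⟨j, k, h1, h2, h3⟩)
    · exact Or.inr (Or.inl ⟨h2, h1⟩)
    · exact Or.inl ⟨h2, h1⟩
    · exact Or.inr (Or.inr ⟨k, j, h2, h1, h3.symm⟩)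
  loopless := by
    constructor
    rintro a (⟨h1, h2⟩ | ⟨h1, h2⟩ | ⟨j, k, h1, h2, h3⟩)
    · exact h2 h1
    · exact h1 h2
    · rw [h1] at h2
      rw [Fin.succ_injective m h2] at h3
      exact G'.irrefl h3

lemma addDom_nbr_zero {m : ℕ} (G' : SimpleGraph (Fin m)) :
    (addDom G').neighborSet 0 = ({(0 : Fin (m+1))}ᶜ : Set (Fin (m+1))) := by
  ext w
  simp only [SimpleGraph.mem_neighborSet, Set.mem_compl_iff, Set.mem_singleton_iff]
  constructor
  · rintro (⟨h1, h2⟩ | ⟨h1, h2⟩ | ⟨j, k, h1, h2, h3⟩)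
    · exact h2
    · exact absurd rfl h1
    · exact absurd h1.symm (Fin.succ_ne_zero j)
  · intro hw
    exact Or.inl ⟨rfl, hw⟩

lemma addDom_nbr_succ {m : ℕ} (G' : SimpleGraph (Fin m)) (j : Fin m) :
    (addDom G').neighborSet j.succ = insert 0 (Fin.succ '' (G'.neighborSet j)) := by
  ext w
  simp only [SimpleGraph.mem_neighborSet, Set.mem_insert_iff, Set.mem_image]
  constructor
  · rintro (⟨h1, h2⟩ | ⟨h1, h2⟩ | ⟨j', k, h1, h2, h3⟩)
    · exact absurd h1 (Fin.succ_ne_zero j)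
    · exact Or.inl h2
    · right
      rw [← Fin.succ_injective m h1] at h3
      exact ⟨k, h3, h2.symm⟩
  · rintro (h | ⟨k, hk, hkeq⟩)
    · exact Or.inr (Or.inl ⟨Fin.succ_ne_zero j, h⟩)
    · exact Or.inr (Or.inr ⟨j, k, rfl, hkeq.symm, hk⟩)

def toSeq {m : ℕ} (d : Fin (m + 1) → ℕ) : Fin m → ℕ := fun j => d j.succ - 1

def fromSeq {m : ℕ} (e : Fin m → ℕ) : Fin (m + 1) → ℕ := Fin.cases m (fun j => e j + 1)

lemma head_eq {m : ℕ} {d : Fin (m + 1) → ℕ} (hd : d ∈ H (m + 1)) : d 0 = m := by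
  obtain ⟨⟨hanti, hpos, G, hG⟩, i, hi⟩ := hd
  have h1 : d i ≤ d 0 := hanti (Fin.zero_le i)
  have h2 : d 0 ≤ m := by
    have := deg_lt G 0
    rw [hG 0] at this
    omega
  simp only [Nat.add_sub_cancel] at hi
  omega

lemma forward {m : ℕ} {d : Fin (m + 1) → ℕ} (hd : d ∈ H (m + 1)) : toSeq d ∈ D0 m := by
  obtain ⟨⟨hanti, hpos, G, hG⟩, i, hi⟩ := hd
  have h0 : d 0 = m := head_eq ⟨⟨hanti, hpos, G, hG⟩, i, hi⟩
  constructor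
  · intro j k hjk
    exact Nat.sub_le_sub_right (hanti (Fin.succ_le_succ_iff.mpr hjk)) 1
  · refine ⟨G.comap Fin.succ, fun j => ?_⟩
    have hdom : ∀ w, w ≠ 0 → G.Adj 0 w := dominating G (by rw [hG 0, h0])
    have := graphic_del G hdom j
    rw [hG j.succ] at this
    simp only [toSeq]
    omega

lemma backward {m : ℕ} (hm : 1 ≤ m) {e : Fin m → ℕ} (he : e ∈ D0 m) :
    fromSeq e ∈ H (m + 1) := by
  obtain ⟨hanti, G', hG'⟩ := he
  have hub : ∀ j, e j + 1 ≤ m := fun j => by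
    have := deg_lt G' j; rw [hG' j] at this; omega
  refine ⟨⟨?_, ?_, ?_⟩, 0, ?_⟩
  · intro a b hab
    revert hab
    refine Fin.cases ?_ (fun k => ?_) b
    · intro ha
      have : a = 0 := le_antisymm ha (Fin.zero_le a)
      rw [this]
    · refine Fin.cases ?_ (fun j => ?_) a
      · intro _
        simpa [fromSeq] using hub k
      · intro hjk
        simp only [fromSeq, Fin.cases_succ]
        have : j ≤ k := Fin.succ_le_succ_iff.mp hjk
        exact Nat.add_le_add_right (hanti this) 1
  · intro i
    refine Fin.cases ?_ (fun j => ?_) i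
    · simp [fromSeq]
      omega
    · simp [fromSeq]
  · refine ⟨addDom G', fun v => ?_⟩
    refine Fin.cases ?_ (fun j => ?_) v
    · rw [addDom_nbr_zero, ncard_compl_singleton]
      simp [fromSeq]
    · rw [addDom_nbr_succ]
      rw [Set.ncard_insert_of_notMem, Set.ncard_image_of_injective _ (Fin.succ_injective m),
        hG' j]
      · simp [fromSeq]
      · rintro ⟨k, -, hk⟩
        exact Fin.succ_ne_zero k hk
  · simp [fromSeq]

def theEquiv (m : ℕ) (hm : 1 ≤ m) : H (m + 1) ≃ D0 m where
  toFun x := ⟨toSeq x.1, forward x.2⟩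
  invFun y := ⟨fromSeq y.1, backward hm y.2⟩
  left_inv := by
    rintro ⟨d, hd⟩
    ext i
    refine Fin.cases ?_ (fun j => ?_) i
    · simp only [fromSeq, Fin.cases_zero]
      exact (head_eq hd).symm
    · simp only [fromSeq, toSeq, Fin.cases_succ]
      have := hd.1.2.1 j.succ
      omega
  right_inv := by
    rintro ⟨e, he⟩
    ext j
    simp [toSeq, fromSeq]

end HD0Aux

theorem H_equiv_D0 (n : ℕ) (hn : 2 ≤ n) :
    Nonempty (H n ≃ D0 (n - 1)) ∧ (H n).ncard = (D0 (n - 1)).ncard := by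
  obtain ⟨m, rfl⟩ : ∃ m, n = m + 1 := ⟨n - 1, by omega⟩
  have hm : 1 ≤ m := by omega
  have e : H (m + 1) ≃ D0 m := HD0Aux.theEquiv m hm
  have h1 : m + 1 - 1 = m := by omega
  rw [h1]
  exact ⟨⟨e⟩, by rw [← Nat.card_coe_set_eq, ← Nat.card_coe_set_eq]; exact Nat.card_congr e⟩
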